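/- The space of closed subgroups of ℝ with the Chabauty topology is homeomorphic to a closed interval: it consists of {0}, the groups aℤ for a > 0, and ℝ itself, with aℤ → ℝ as a → 0⁺ and aℤ → {0} as a → +∞. -/

import Mathlib

open Filter Topology Set

open Metric

/-- The Chabauty–Fell topology on the powerset of `X`. -/
def ChabautyFell (X : Type*) [TopologicalSpace X] : TopologicalSpace (Set X) :=
  TopologicalSpace.generateFrom
    ({S | ∃ K : Set X, IsCompact K ∧ S = {A : Set X | A ∩ K = ∅}} ∪
     {S | ∃ U : Set X, IsOpen U ∧ S = {A : Set X | (A ∩ U).Nonempty}})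

lemma tendsto_chabauty {α : Type*} {l : Filter α} {f : α → Set ℝ} {A : Set ℝ}
    (h1 : ∀ K : Set ℝ, IsCompact K → A ∩ K = ∅ → ∀ᶠ t in l, f t ∩ K = ∅)
    (h2 : ∀ U : Set ℝ, IsOpen U → (A ∩ U).Nonempty → ∀ᶠ t in l, (f t ∩ U).Nonempty) :
    Tendsto f l (@nhds _ (ChabautyFell ℝ) A) := by
  rw [ChabautyFell, TopologicalSpace.tendsto_nhds_generateFrom_iff]
  rintro S (⟨K, hK, rfl⟩ | ⟨U, hU, rfl⟩) hAS
  · exact h1 K hK hAS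
  · exact h2 U hU hAS

-- closedness of aℤ
lemma isClosed_mulZ (a : ℝ) (ha : a ≠ 0) : IsClosed (Set.range fun k : ℤ => a * (k : ℝ)) := by
  have h : (Set.range fun k : ℤ => a * (k : ℝ)) = (fun x : ℝ => a * x) '' Set.range ((↑) : ℤ → ℝ) := by
    rw [← Set.range_comp]; rfl
  rw [h]
  exact (Homeomorph.mulLeft₀ a ha).isClosedMap _ Int.isClosedEmbedding_coe_real.isClosed_range

lemma exists_multiple_close (a x δ : ℝ) (ha : 0 < a) (had : a ≤ δ) : ∃ k : ℤ, |a * k - x| < δ := by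
  refine ⟨⌈x / a⌉, ?_⟩
  have h1 : x ≤ a * (⌈x / a⌉ : ℝ) := by
    rw [mul_comm, ← div_le_iff₀ ha]; exact Int.le_ceil _
  have h2 : a * (⌈x / a⌉ : ℝ) < x + a := by
    have := Int.ceil_lt_add_one (x / a)
    have := (mul_lt_mul_of_pos_left this ha)
    rwa [mul_add, mul_one, mul_div_cancel₀ _ ha.ne'] at this
  rw [abs_lt]; constructor <;> linarith

lemma tendsto_atTop_chabauty :
    Tendsto (fun a : ℝ => Set.range fun k : ℤ => a * (k : ℝ))
      atTop (@nhds _ (ChabautyFell ℝ) ({0} : Set ℝ)) := by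
  apply tendsto_chabauty
  · intro K hK hdisj
    have h0 : (0 : ℝ) ∉ K := by
      intro h
      have : (0:ℝ) ∈ ({0} : Set ℝ) ∩ K := ⟨Set.mem_singleton 0, h⟩
      rw [hdisj] at this; exact this
    obtain ⟨M, hM⟩ := hK.isBounded.subset_ball 0
    filter_upwards [eventually_ge_atTop (max M 1)] with a haM
    ext x
    simp only [Set.mem_inter_iff, Set.mem_range, Set.mem_empty_iff_false, iff_false, not_and]
    rintro ⟨k, rfl⟩ hxK
    have hxball := hM hxK
    rw [mem_ball, dist_zero_right, Real.norm_eq_abs] at hxball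
    have ha1 : (1 : ℝ) ≤ a := le_trans (le_max_right _ _) haM
    have haM' : M ≤ a := le_trans (le_max_left _ _) haM
    have hk0 : k = 0 := by
      by_contra hk
      have : (1 : ℝ) ≤ |(k : ℝ)| := by exact_mod_cast Int.one_le_abs (by omega)
      have : a ≤ |a * k| := by
        rw [abs_mul, abs_of_pos (by linarith : (0:ℝ) < a)]
        nlinarith
      linarith
    rw [hk0] at hxK
    simp at hxK
    exact h0 hxK
  · intro U hU hne
    have h0 : (0 : ℝ) ∈ U := by
      obtain ⟨x, hx0, hxU⟩ := hne
      rw [mem_singleton_iff] at hx0; rwa [hx0] at hxU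
    filter_upwards with a
    exact ⟨0, ⟨0, by simp⟩, h0⟩

lemma tendsto_zeroPlus_chabauty :
    Tendsto (fun a : ℝ => Set.range fun k : ℤ => a * (k : ℝ))
      (nhdsWithin 0 (Set.Ioi 0)) (@nhds _ (ChabautyFell ℝ) (Set.univ : Set ℝ)) := by
  apply tendsto_chabauty
  · intro K hK hdisj
    rw [Set.univ_inter] at hdisj
    subst hdisj
    filter_upwards with a
    exact Set.inter_empty _
  · intro U hU hne
    obtain ⟨x, _, hxU⟩ := hne
    obtain ⟨δ, hδ, hball⟩ := Metric.isOpen_iff.1 hU x hxU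
    filter_upwards [Ioo_mem_nhdsGT_of_mem (by constructor <;> [rfl; exact hδ] : (0:ℝ) ∈ Set.Ico 0 δ)] with a ha
    obtain ⟨k, hk⟩ := exists_multiple_close a x δ ha.1 ha.2.le
    exact ⟨a * k, ⟨k, rfl⟩, hball (by rwa [mem_ball, Real.dist_eq])⟩

lemma tendsto_nhds_chabauty (a₀ : ℝ) (ha₀ : 0 < a₀) :
    Tendsto (fun a : ℝ => Set.range fun k : ℤ => a * (k : ℝ))
      (𝓝 a₀) (@nhds _ (ChabautyFell ℝ) (Set.range fun k : ℤ => a₀ * (k : ℝ))) := by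
  apply tendsto_chabauty
  · intro K hK hdisj
    have hclosed := isClosed_mulZ a₀ ha₀.ne'
    have hsub : K ⊆ (Set.range fun k : ℤ => a₀ * (k:ℝ))ᶜ := by
      intro x hxK hxR
      have : x ∈ (Set.range fun k : ℤ => a₀ * (k:ℝ)) ∩ K := ⟨hxR, hxK⟩
      rw [hdisj] at this; exact this
    obtain ⟨δ, hδ, hthick⟩ := hK.exists_thickening_subset_open hclosed.isOpen_compl hsub
    obtain ⟨M, hM⟩ := hK.isBounded.subset_ball 0
    have hM' : (0:ℝ) < max M 1 := lt_of_lt_of_le one_pos (le_max_right _ _)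
    set M' := max M 1 with hM'def
    have hKM : K ⊆ ball 0 M' := hM.trans (Metric.ball_subset_ball (le_max_left _ _))
    have hε : 0 < min (a₀/2) (δ * a₀ / (4*M')) := lt_min (by linarith) (by positivity)
    filter_upwards [Metric.ball_mem_nhds a₀ hε] with a ha
    rw [mem_ball, Real.dist_eq] at ha
    have ha1 : |a - a₀| < a₀/2 := lt_of_lt_of_le ha (min_le_left _ _)
    have ha2 : |a - a₀| < δ * a₀ / (4*M') := lt_of_lt_of_le ha (min_le_right _ _)
    have hapos : a₀/2 < a := by
      rcases abs_lt.1 ha1 with ⟨h1, h2⟩; linarith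
    ext x
    simp only [Set.mem_inter_iff, Set.mem_range, Set.mem_empty_iff_false, iff_false, not_and]
    rintro ⟨k, rfl⟩ hxK
    have hxb : |a * k| < M' := by
      have := hKM hxK; rwa [mem_ball, dist_zero_right, Real.norm_eq_abs] at this
    have hkb : |(k:ℝ)| * a₀ < 2 * M' := by
      have h1 : a₀/2 * |(k:ℝ)| ≤ |a * k| := by
        rw [abs_mul, abs_of_pos (by linarith : (0:ℝ) < a)]
        nlinarith [abs_nonneg (k:ℝ)]
      linarith
    have hclose : |a - a₀| * |(k:ℝ)| < δ := by
      have hRHS : (δ * a₀ / (4*M')) * (2*M'/a₀) = δ/2 := by field_simp; ring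
      have h2 : |(k:ℝ)| < 2*M'/a₀ := by rw [lt_div_iff₀ ha₀]; linarith
      nlinarith [mul_lt_mul'' ha2 h2 (abs_nonneg (a - a₀)) (abs_nonneg (k:ℝ))]
    have hmem : a₀ * k ∈ Metric.thickening δ K := by
      rw [Metric.mem_thickening_iff]
      refine ⟨a * k, hxK, ?_⟩
      rw [Real.dist_eq]
      calc |a₀ * k - a * k| = |a - a₀| * |(k:ℝ)| := by
            rw [← abs_mul, ← abs_neg]; ring_nf
        _ < δ := hclose
    exact (hthick hmem) ⟨k, rfl⟩
  · intro U hU hne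
    obtain ⟨x, ⟨k, rfl⟩, hxU⟩ := hne
    obtain ⟨δ, hδ, hball⟩ := Metric.isOpen_iff.1 hU _ hxU
    have hε : 0 < δ / (|(k:ℝ)| + 1) := by positivity
    filter_upwards [Metric.ball_mem_nhds a₀ hε] with a ha
    rw [mem_ball, Real.dist_eq] at ha
    refine ⟨a * k, ⟨k, rfl⟩, hball ?_⟩
    rw [mem_ball, Real.dist_eq]
    have heq : |a * k - a₀ * k| = |a - a₀| * |(k:ℝ)| := by rw [← abs_mul]; ring_nf
    rw [heq]
    rw [lt_div_iff₀ (by positivity : (0:ℝ) < |(k:ℝ)| + 1)] at ha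
    nlinarith [abs_nonneg (a - a₀), abs_nonneg (k:ℝ)]

lemma range_zmultiples (a : ℝ) :
    ((AddSubgroup.zmultiples a : AddSubgroup ℝ) : Set ℝ) = Set.range fun k : ℤ => a * (k:ℝ) := by
  ext x
  simp only [SetLike.mem_coe, AddSubgroup.mem_zmultiples_iff, Set.mem_range]
  constructor
  · rintro ⟨k, rfl⟩; exact ⟨k, by rw [zsmul_eq_mul, mul_comm]⟩
  · rintro ⟨k, rfl⟩; exact ⟨k, by rw [zsmul_eq_mul, mul_comm]⟩

lemma range_neg_eq (a : ℝ) :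
    (Set.range fun k : ℤ => a * (k:ℝ)) = Set.range fun k : ℤ => (-a) * (k:ℝ) := by
  ext x
  constructor
  · rintro ⟨k, rfl⟩; exact ⟨-k, by push_cast; ring⟩
  · rintro ⟨k, rfl⟩; exact ⟨-k, by push_cast; ring⟩

lemma classify (H : AddSubgroup ℝ) (hc : IsClosed (H : Set ℝ)) :
    (H : Set ℝ) = {0} ∨ (H : Set ℝ) = Set.univ ∨
      ∃ a : ℝ, 0 < a ∧ (H : Set ℝ) = Set.range fun k : ℤ => a * (k : ℝ) := by
  rcases H.dense_or_cyclic with hd | ⟨a, rfl⟩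
  · right; left
    rw [← hc.closure_eq, hd.closure_eq]
  · rcases lt_trichotomy a 0 with ha | rfl | ha
    · right; right
      refine ⟨-a, by linarith, ?_⟩
      rw [← AddSubgroup.zmultiples_eq_closure, range_zmultiples, range_neg_eq]
    · left
      rw [← AddSubgroup.zmultiples_eq_closure, range_zmultiples]
      ext x
      simp only [Set.mem_range, Set.mem_singleton_iff]
      constructor
      · rintro ⟨k, rfl⟩; simp
      · rintro rfl; exact ⟨0, by simp⟩
    · right; right
      exact ⟨a, ha, by rw [← AddSubgroup.zmultiples_eq_closure, range_zmultiples]⟩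

/-- Parametrization of the closed subgroups of `ℝ`. -/
noncomputable def Gr (t : ℝ) : Set ℝ :=
  if t ≤ 0 then {0} else if 1 ≤ t then Set.univ
    else Set.range fun k : ℤ => ((1-t)/t) * (k:ℝ)

lemma zero_mem_Gr (t : ℝ) : (0:ℝ) ∈ Gr t := by
  unfold Gr
  split_ifs
  · exact rfl
  · trivial
  · exact ⟨0, by simp⟩

lemma mulZ_inter_empty {a M : ℝ} {K : Set ℝ} (hM : K ⊆ Metric.ball 0 M) (ha : 0 < a)
    (haM : M < a) (h0 : (0:ℝ) ∉ K) :
    (Set.range fun k : ℤ => a * (k:ℝ)) ∩ K = ∅ := by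
  ext x
  simp only [Set.mem_inter_iff, Set.mem_range, Set.mem_empty_iff_false, iff_false, not_and]
  rintro ⟨k, rfl⟩ hxK
  have hxb : |a * k| < M := by
    have := hM hxK; rwa [Metric.mem_ball, dist_zero_right, Real.norm_eq_abs] at this
  have hk0 : k = 0 := by
    by_contra hk
    have h1 : (1 : ℝ) ≤ |(k : ℝ)| := by exact_mod_cast Int.one_le_abs (by omega)
    have : a ≤ |a * k| := by
      rw [abs_mul, abs_of_pos ha]; nlinarith
    linarith
  rw [hk0] at hxK; simp at hxK; exact h0 hxK

lemma continuous_Gr : @Continuous ℝ (Set ℝ) _ (ChabautyFell ℝ) Gr := by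
  rw [@continuous_iff_continuousAt _ _ _ (ChabautyFell ℝ)]
  intro t₀
  show Tendsto Gr (nhds t₀) (@nhds _ (ChabautyFell ℝ) (Gr t₀))
  rcases lt_trichotomy t₀ 0 with ht | rfl | ht
  · -- locally constant {0}
    have hGr : Gr t₀ = {0} := if_pos ht.le
    rw [hGr]
    refine (@tendsto_const_nhds (Set ℝ) (ChabautyFell ℝ) ℝ _ _).congr' ?_
    filter_upwards [Iio_mem_nhds ht] with t htIio
    exact (if_pos (le_of_lt htIio)).symm
  · -- t₀ = 0
    have hGr : Gr 0 = {0} := if_pos le_rfl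
    rw [hGr]
    apply tendsto_chabauty
    · intro K hK hdisj
      have h0 : (0 : ℝ) ∉ K := by
        intro h
        have : (0:ℝ) ∈ ({0} : Set ℝ) ∩ K := ⟨Set.mem_singleton 0, h⟩
        rw [hdisj] at this; exact this
      obtain ⟨M, hM⟩ := hK.isBounded.subset_ball 0
      have hM' : (0:ℝ) < max M 1 := lt_of_lt_of_le one_pos (le_max_right _ _)
      set M' := max M 1 with hM'def
      have hKM : K ⊆ Metric.ball 0 M' := hM.trans (Metric.ball_subset_ball (le_max_left _ _))
      have hεpos : (0:ℝ) < 1 / (M' + 2) := by positivity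
      filter_upwards [Metric.ball_mem_nhds (0:ℝ) hεpos] with t ht
      rw [Metric.mem_ball, Real.dist_eq, sub_zero] at ht
      unfold Gr
      split_ifs with h1 h2
      · exact hdisj
      · exfalso
        have : (1:ℝ) ≤ |t| := le_trans h2 (le_abs_self t)
        have : (1:ℝ)/(M'+2) < 1 := by
          rw [div_lt_one (by linarith)]; linarith
        linarith
      · push_neg at h1
        have htlt : t < 1 / (M' + 2) := lt_of_abs_lt ht
        have ha : 0 < (1 - t)/t := by
          apply div_pos _ h1
          have : (1:ℝ)/(M'+2) ≤ 1 := by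
            rw [div_le_one (by linarith)]; linarith
          linarith
        refine mulZ_inter_empty hKM ha ?_ h0
        rw [lt_div_iff₀ h1]
        have h2' : (M'+2) * t < 1 := by
          rw [← lt_div_iff₀' (by linarith : (0:ℝ) < M'+2)]; exact htlt
        nlinarith
    · intro U hU hne
      have h0 : (0 : ℝ) ∈ U := by
        obtain ⟨x, hx0, hxU⟩ := hne
        rw [Set.mem_singleton_iff] at hx0; rwa [hx0] at hxU
      filter_upwards with t
      exact ⟨0, zero_mem_Gr t, h0⟩
  · rcases lt_trichotomy t₀ 1 with ht1 | rfl | ht1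
    · -- 0 < t₀ < 1
      have ha₀ : 0 < (1 - t₀)/t₀ := div_pos (by linarith) ht
      have hGr : Gr t₀ = Set.range fun k : ℤ => ((1-t₀)/t₀) * (k:ℝ) := by
        unfold Gr; rw [if_neg (not_le.2 ht), if_neg (not_le.2 ht1)]
      rw [hGr]
      have hcont : ContinuousAt (fun t : ℝ => (1 - t)/t) t₀ :=
        ContinuousAt.div (continuousAt_const.sub continuousAt_id) continuousAt_id ht.ne'
      have := (tendsto_nhds_chabauty _ ha₀).comp hcont
      refine this.congr' ?_
      filter_upwards [Ioo_mem_nhds ht ht1] with t htIoo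
      unfold Gr
      rw [if_neg (not_le.2 htIoo.1), if_neg (not_le.2 htIoo.2)]
      rfl
    · -- t₀ = 1
      have hGr : Gr 1 = Set.univ := by unfold Gr; rw [if_neg (by norm_num), if_pos le_rfl]
      rw [hGr]
      apply tendsto_chabauty
      · intro K hK hdisj
        rw [Set.univ_inter] at hdisj
        subst hdisj
        filter_upwards with t
        exact Set.inter_empty _
      · intro U hU hne
        obtain ⟨x, _, hxU⟩ := hne
        obtain ⟨δ, hδ, hball⟩ := Metric.isOpen_iff.1 hU x hxU
        have hεpos : (0:ℝ) < min (1/2) (δ/2) := lt_min (by norm_num) (by linarith)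
        filter_upwards [Metric.ball_mem_nhds (1:ℝ) hεpos] with t htb
        rw [Metric.mem_ball, Real.dist_eq] at htb
        have h1 : |t - 1| < 1/2 := lt_of_lt_of_le htb (min_le_left _ _)
        have h2 : |t - 1| < δ/2 := lt_of_lt_of_le htb (min_le_right _ _)
        rcases abs_lt.1 h1 with ⟨h1a, h1b⟩
        rcases abs_lt.1 h2 with ⟨h2a, h2b⟩
        unfold Gr
        split_ifs with hle h1t
        · exfalso; linarith
        · exact ⟨x, trivial, hxU⟩
        · push_neg at hle h1t
          have hApos : 0 < (1 - t)/t := div_pos (by linarith) hle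
          have hAδ : (1 - t)/t ≤ δ := by
            rw [div_le_iff₀ hle]; nlinarith
          obtain ⟨k, hk⟩ := exists_multiple_close _ x δ hApos hAδ
          exact ⟨_, ⟨k, rfl⟩, hball (by rwa [Metric.mem_ball, Real.dist_eq])⟩
    · -- t₀ > 1 : locally constant univ
      have hGr : Gr t₀ = Set.univ := by
        unfold Gr; rw [if_neg (by linarith), if_pos ht1.le]
      rw [hGr]
      refine (@tendsto_const_nhds (Set ℝ) (ChabautyFell ℝ) ℝ _ _).congr' ?_
      filter_upwards [Ioi_mem_nhds ht1] with t htIoi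
      unfold Gr
      rw [if_neg (by push_neg; linarith [Set.mem_Ioi.1 htIoi]), if_pos (le_of_lt htIoi)]

/-- The space of closed subgroups of `ℝ` with the Chabauty topology. -/
def CsubR : Type := {A : Set ℝ // IsClosed A ∧ ∃ H : AddSubgroup ℝ, A = (H : Set ℝ)}

instance : TopologicalSpace CsubR :=
  TopologicalSpace.induced Subtype.val (ChabautyFell ℝ)

lemma Gr_mem (t : ℝ) : IsClosed (Gr t) ∧ ∃ H : AddSubgroup ℝ, Gr t = (H : Set ℝ) := by
  unfold Gr
  split_ifs with h1 h2
  · exact ⟨isClosed_singleton, ⊥, by simp⟩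
  · exact ⟨isClosed_univ, ⊤, by simp⟩
  · push_neg at h1 h2
    have ha : (0:ℝ) < (1-t)/t := div_pos (by linarith) h1
    exact ⟨isClosed_mulZ _ ha.ne', AddSubgroup.zmultiples ((1-t)/t), (range_zmultiples _).symm⟩

noncomputable def fIcc (t : Set.Icc (0:ℝ) 1) : CsubR := ⟨Gr t.1, Gr_mem t.1⟩

lemma continuous_fIcc : Continuous fIcc := by
  apply continuous_induced_rng.2
  exact @Continuous.comp (Set.Icc (0:ℝ) 1) ℝ (Set ℝ) _ _ (ChabautyFell ℝ)
    Subtype.val Gr continuous_Gr continuous_subtype_val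

-- distinctness lemmas
lemma ne_singleton_univ : ({0} : Set ℝ) ≠ Set.univ := by
  intro h
  have : (1:ℝ) ∈ ({0} : Set ℝ) := h ▸ trivial
  simp at this

lemma ne_singleton_range {a : ℝ} (ha : 0 < a) :
    ({0} : Set ℝ) ≠ Set.range fun k : ℤ => a * (k:ℝ) := by
  intro h
  have : a ∈ ({0} : Set ℝ) := h ▸ ⟨1, by simp⟩
  simp at this
  linarith

lemma ne_univ_range {a : ℝ} (ha : 0 < a) :
    (Set.univ : Set ℝ) ≠ Set.range fun k : ℤ => a * (k:ℝ) := by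
  intro h
  have : a/2 ∈ Set.range fun k : ℤ => a * (k:ℝ) := h ▸ trivial
  obtain ⟨k, hk⟩ := this
  have h2 : (2 * k : ℝ) = 1 := by
    field_simp at hk ⊢
    nlinarith
  have : ((2 * k : ℤ) : ℝ) = ((1:ℤ):ℝ) := by push_cast; linarith
  have : (2 * k : ℤ) = 1 := by exact_mod_cast this
  omega

lemma range_inj {a b : ℝ} (ha : 0 < a) (hb : 0 < b)
    (h : (Set.range fun k : ℤ => a * (k:ℝ)) = Set.range fun k : ℤ => b * (k:ℝ)) : a = b := by
  have hge : ∀ c d : ℝ, 0 < c → 0 < d →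
      (Set.range fun k : ℤ => c * (k:ℝ)) ⊆ (Set.range fun k : ℤ => d * (k:ℝ)) → d ≤ c := by
    intro c d hc hd hsub
    obtain ⟨k, hk⟩ := hsub ⟨1, rfl⟩
    push_cast at hk
    rw [mul_one] at hk
    have hkpos : (0:ℝ) < (k:ℝ) := by
      by_contra hkn
      push_neg at hkn
      nlinarith
    have hkz : 0 < k := by exact_mod_cast hkpos
    have h1k : (1:ℝ) ≤ (k:ℝ) := by exact_mod_cast hkz
    nlinarith
  exact le_antisymm (hge b a hb ha h.symm.subset) (hge a b ha hb h.subset)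

lemma Gr_eq_cases (t : ℝ) (ht : t ∈ Set.Icc (0:ℝ) 1) :
    (t = 0 ∧ Gr t = {0}) ∨ (t = 1 ∧ Gr t = Set.univ) ∨
      (0 < t ∧ t < 1 ∧ Gr t = Set.range fun k : ℤ => ((1-t)/t) * (k:ℝ)) := by
  obtain ⟨h0, h1⟩ := ht
  rcases eq_or_lt_of_le h0 with rfl | h0'
  · exact Or.inl ⟨rfl, if_pos le_rfl⟩
  rcases eq_or_lt_of_le h1 with rfl | h1'
  · exact Or.inr (Or.inl ⟨rfl, by unfold Gr; rw [if_neg (by norm_num), if_pos le_rfl]⟩)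
  · refine Or.inr (Or.inr ⟨h0', h1', ?_⟩)
    unfold Gr; rw [if_neg (not_le.2 h0'), if_neg (not_le.2 h1')]

lemma fIcc_injective : Function.Injective fIcc := by
  rintro ⟨t, ht⟩ ⟨s, hs⟩ h
  have hGr : Gr t = Gr s := congrArg Subtype.val h
  ext
  show t = s
  rcases Gr_eq_cases t ht with ⟨rfl, e1⟩ | ⟨rfl, e1⟩ | ⟨ht0, ht1, e1⟩ <;>
    rcases Gr_eq_cases s hs with ⟨rfl, e2⟩ | ⟨rfl, e2⟩ | ⟨hs0, hs1, e2⟩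
  · rfl
  · exact absurd (e1 ▸ e2 ▸ hGr) ne_singleton_univ
  · exact absurd (e1 ▸ e2 ▸ hGr) (ne_singleton_range (div_pos (by linarith) hs0))
  · exact absurd (e1 ▸ e2 ▸ hGr).symm ne_singleton_univ
  · rfl
  · exact absurd (e1 ▸ e2 ▸ hGr) (ne_univ_range (div_pos (by linarith) hs0))
  · exact absurd (e1 ▸ e2 ▸ hGr).symm (ne_singleton_range (div_pos (by linarith) ht0))
  · exact absurd (e1 ▸ e2 ▸ hGr).symm (ne_univ_range (div_pos (by linarith) ht0))
  · have := range_inj (div_pos (by linarith) ht0) (div_pos (by linarith) hs0) (e1 ▸ e2 ▸ hGr)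
    rw [div_eq_div_iff ht0.ne' hs0.ne'] at this
    nlinarith

lemma fIcc_surjective : Function.Surjective fIcc := by
  rintro ⟨A, hA, H, rfl⟩
  rcases classify H hA with h | h | ⟨a, ha, h⟩
  · refine ⟨⟨0, le_rfl, zero_le_one⟩, Subtype.ext ?_⟩
    show Gr 0 = (H : Set ℝ)
    unfold Gr
    rw [if_pos le_rfl]
    exact h.symm
  · refine ⟨⟨1, zero_le_one, le_rfl⟩, Subtype.ext ?_⟩
    show Gr 1 = (H : Set ℝ)
    unfold Gr
    rw [if_neg (by norm_num), if_pos le_rfl]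
    exact h.symm
  · have h1a : (0:ℝ) < 1 + a := by linarith
    refine ⟨⟨1/(1+a), by positivity, ?_⟩, Subtype.ext ?_⟩
    · rw [div_le_one h1a]; linarith
    · show Gr (1/(1+a)) = (H : Set ℝ)
      have ht0 : (0:ℝ) < 1/(1+a) := by positivity
      have ht1 : 1/(1+a) < 1 := by rw [div_lt_one h1a]; linarith
      unfold Gr
      rw [if_neg (not_le.2 ht0), if_neg (not_le.2 ht1), h]
      have hA : (1 - 1/(1+a))/(1/(1+a)) = a := by field_simp; ring
      rw [hA]

lemma sep_aux (A B : CsubR) (x : ℝ) (hxA : x ∈ A.1) (hxB : x ∉ B.1) :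
    ∃ u v : Set CsubR, IsOpen u ∧ IsOpen v ∧ A ∈ u ∧ B ∈ v ∧ Disjoint u v := by
  have hBclosed : IsClosed B.1 := B.2.1
  obtain ⟨ε, hε, hball⟩ := Metric.isOpen_iff.1 hBclosed.isOpen_compl x hxB
  refine ⟨Subtype.val ⁻¹' {C : Set ℝ | (C ∩ Metric.ball x (ε/2)).Nonempty},
          Subtype.val ⁻¹' {C : Set ℝ | C ∩ Metric.closedBall x (ε/2) = ∅}, ?_, ?_, ?_, ?_, ?_⟩
  · exact isOpen_induced (t := ChabautyFell ℝ)
      (TopologicalSpace.isOpen_generateFrom_of_mem (Or.inr ⟨_, Metric.isOpen_ball, rfl⟩))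
  · exact isOpen_induced (t := ChabautyFell ℝ)
      (TopologicalSpace.isOpen_generateFrom_of_mem
        (Or.inl ⟨_, isCompact_closedBall x (ε/2), rfl⟩))
  · exact ⟨x, hxA, Metric.mem_ball_self (by linarith)⟩
  · show B.1 ∩ Metric.closedBall x (ε/2) = ∅
    ext y
    simp only [Set.mem_inter_iff, Set.mem_empty_iff_false, iff_false, not_and]
    intro hyB hyb
    rw [Metric.mem_closedBall] at hyb
    have : y ∈ Metric.ball x ε := by rw [Metric.mem_ball]; linarith
    exact hball this hyB
  · rw [Set.disjoint_left]
    rintro C ⟨y, hyC, hyb⟩ hC2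
    have : y ∈ C.1 ∩ Metric.closedBall x (ε/2) :=
      ⟨hyC, Metric.ball_subset_closedBall hyb⟩
    rw [hC2] at this
    exact this

lemma t2_CsubR : T2Space CsubR := by
  refine ⟨fun A B hne => ?_⟩
  have hval : A.1 ≠ B.1 := fun h => hne (Subtype.ext h)
  obtain ⟨x, hx⟩ := Set.symmDiff_nonempty.2 hval
  rcases Set.mem_symmDiff.1 hx with ⟨hxA, hxB⟩ | ⟨hxB, hxA⟩
  · exact sep_aux A B x hxA hxB
  · obtain ⟨u, v, hu, hv, hBu, hAv, hd⟩ := sep_aux B A x hxB hxA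
    exact ⟨v, u, hv, hu, hAv, hBu, hd.symm⟩

/-- the Chabauty space of closed subgroups of `ℝ` is homeomorphic to a
closed interval; it consists of `{0}`, the groups `aℤ` (`a > 0`) and `ℝ`, with
`aℤ → ℝ` as `a → 0⁺` and `aℤ → {0}` as `a → +∞`. -/
theorem stmt19 :
    (∀ H : AddSubgroup ℝ, IsClosed (H : Set ℝ) →
      (H : Set ℝ) = {0} ∨ (H : Set ℝ) = Set.univ ∨
        ∃ a : ℝ, 0 < a ∧ (H : Set ℝ) = Set.range fun k : ℤ => a * (k : ℝ)) ∧
    Nonempty (CsubR ≃ₜ (Set.Icc (0 : ℝ) 1)) ∧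
    Tendsto (fun a : ℝ => Set.range fun k : ℤ => a * (k : ℝ))
      (nhdsWithin 0 (Set.Ioi 0)) (@nhds _ (ChabautyFell ℝ) (Set.univ : Set ℝ)) ∧
    Tendsto (fun a : ℝ => Set.range fun k : ℤ => a * (k : ℝ))
      atTop (@nhds _ (ChabautyFell ℝ) ({0} : Set ℝ)) := by
  refine ⟨classify, ?_, tendsto_zeroPlus_chabauty, tendsto_atTop_chabauty⟩
  haveI : T2Space CsubR := t2_CsubR
  haveI : CompactSpace (Set.Icc (0:ℝ) 1) := isCompact_iff_compactSpace.1 isCompact_Icc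
  have hbij : Function.Bijective fIcc := ⟨fIcc_injective, fIcc_surjective⟩
  have hcont : Continuous (Equiv.ofBijective fIcc hbij) := continuous_fIcc
  exact ⟨hcont.homeoOfEquivCompactToT2.symm⟩
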